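/- For every positive integer k and constant C > 0 there exists A > 0 such that for all sufficiently large T, all H with 0 < H ≤ C·√T·(log T)^k, and all t ∈ [T, T+H], |g(t) − ∑_{1 ≤ m < √(T/(2π))} cos(t·log m)/√m| ≤ A·(log T)^k / T^(1/4). -/

import Mathlib

open Complex Real Filter Finset

noncomputable section

/-- The Riemann-Siegel theta function: continuous, vanishing at 0, with
`exp(i θ t) = π^(-it/2) Γ(1/4 + it/2) / |Γ(1/4 + it/2)|`. -/
def IsRSTheta (θ : ℝ → ℝ) : Prop :=
  Continuous θ ∧ θ 0 = 0 ∧ ∀ t : ℝ,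
    Complex.exp (Complex.I * θ t) =
      (Real.pi : ℂ) ^ (-(Complex.I * t) / 2) *
        (Complex.Gamma (1/4 + Complex.I * t / 2) /
          (‖Complex.Gamma (1/4 + Complex.I * t / 2)‖ : ℂ))

/-- The Hardy Z-function attached to a theta function. -/
def HardyZ (θ : ℝ → ℝ) (t : ℝ) : ℝ :=
  (Complex.exp (Complex.I * θ t) * riemannZeta (1/2 + Complex.I * t)).re

/-- A Gram sequence for θ: strictly increasing (for ν ≥ 1), positive, tending to ∞,
with `θ (t_ν) = π ν`. -/
def IsGramSeq (θ : ℝ → ℝ) (ts : ℕ → ℝ) : Prop :=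
  (∀ ν : ℕ, 1 ≤ ν → ts ν < ts (ν + 1)) ∧
  Filter.Tendsto ts Filter.atTop Filter.atTop ∧
  ∀ ν : ℕ, 1 ≤ ν → 0 < ts ν ∧ θ (ts ν) = Real.pi * ν

/-- An admissible function: increasing, tending to +∞, eventually bounded by √(log T). -/
def Admissible (ψ : ℝ → ℝ) : Prop :=
  Monotone ψ ∧ Filter.Tendsto ψ Filter.atTop Filter.atTop ∧
  ∃ T₁ : ℝ, ∀ T ≥ T₁, ψ T ≤ Real.sqrt (Real.log T)

/-- `H̄(T) = √T ψ(T) log T`. -/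
def Hbar (ψ : ℝ → ℝ) (T : ℝ) : ℝ := Real.sqrt T * ψ T * Real.log T

/-- Sum of `f ν` over indices `ν ≥ 1` with `T ≤ t_ν ≤ T + H`. -/
def gramSum (ts : ℕ → ℝ) (T H : ℝ) (f : ℕ → ℝ) : ℝ :=
  ∑' ν : ℕ, if 1 ≤ ν ∧ T ≤ ts ν ∧ ts ν ≤ T + H then f ν else 0

/-- `G(T,H)`: the number of indices `ν ≥ 1` with `T ≤ t_ν`, `t_{ν+1} ≤ T + H` and
`Z(t_ν) Z(t_{ν+1}) < 0`. -/
def GCount (θ : ℝ → ℝ) (ts : ℕ → ℝ) (T H : ℝ) : ℕ :=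
  Nat.card {ν : ℕ // 1 ≤ ν ∧ T ≤ ts ν ∧ ts (ν + 1) ≤ T + H ∧
    HardyZ θ (ts ν) * HardyZ θ (ts (ν + 1)) < 0}

/-- `μ(T,H) = sup_{t ∈ [T,T+H]} |Z(t)|`. -/
def muSup (θ : ℝ → ℝ) (T H : ℝ) : ℝ :=
  sSup ((fun t => |HardyZ θ t|) '' Set.Icc T (T + H))

/-- `g(t) = ∑_{1 ≤ m ≤ √(t/2π)} cos(t log m)/√m`. -/
def gfun (t : ℝ) : ℝ :=
  ∑ m ∈ Finset.Icc 1 ⌊Real.sqrt (t / (2 * Real.pi))⌋₊,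
    Real.cos (t * Real.log m) / Real.sqrt m

lemma sqrt_sqrt_eq_rpow {x : ℝ} (h : 0 ≤ x) :
    Real.sqrt (Real.sqrt x) = x ^ ((1:ℝ)/4) := by
  rw [Real.sqrt_eq_rpow, Real.sqrt_eq_rpow, ← Real.rpow_mul h]; norm_num

theorem g_truncation (k : ℕ) (hk : 1 ≤ k) (C : ℝ) (hC : 0 < C) :
    ∃ A > (0:ℝ), ∃ T₀ : ℝ, ∀ T ≥ T₀, ∀ H : ℝ, 0 < H →
      H ≤ C * Real.sqrt T * (Real.log T) ^ k →
      ∀ t ∈ Set.Icc T (T + H),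
        |gfun t - ∑ m ∈ Finset.Ico 1 ⌈Real.sqrt (T / (2 * Real.pi))⌉₊,
            Real.cos (t * Real.log m) / Real.sqrt m|
          ≤ A * (Real.log T) ^ k / T ^ ((1:ℝ)/4) := by
  have hπ := Real.pi_pos
  have hπ3 := Real.pi_gt_three
  refine ⟨(C + 1) * (2 * Real.pi) ^ ((1:ℝ)/4), by positivity, 10, ?_⟩
  intro T hT H hH hHle t ht
  obtain ⟨htl, htu⟩ := ht
  have hT0 : (0:ℝ) < T := by linarith
  have ht0 : (0:ℝ) ≤ t := by linarith
  set L := Real.log T with hLdef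
  have hL1 : (1:ℝ) ≤ L := by
    rw [hLdef, Real.le_log_iff_exp_le hT0]
    have := Real.exp_one_lt_d9
    linarith
  have hLk : (1:ℝ) ≤ L ^ k := one_le_pow₀ hL1
  set N1 := ⌈Real.sqrt (T / (2 * Real.pi))⌉₊ with hN1def
  set N2 := ⌊Real.sqrt (t / (2 * Real.pi))⌋₊ with hN2def
  set s := Real.sqrt (T / (2 * Real.pi)) with hsdef
  have hs0 : (0:ℝ) ≤ s := Real.sqrt_nonneg _
  have hT2π : (1:ℝ) ≤ T / (2 * Real.pi) := by
    rw [le_div_iff₀ (by positivity)]; nlinarith [Real.pi_lt_d2]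
  have hsqT1 : (1:ℝ) ≤ s := by
    rw [hsdef, show (1:ℝ) = Real.sqrt 1 by simp]
    exact Real.sqrt_le_sqrt hT2π
  have hN1pos : 1 ≤ N1 := by rw [hN1def, Nat.one_le_ceil_iff]; linarith
  have hst : s ≤ Real.sqrt (t / (2 * Real.pi)) := by
    rw [hsdef]; apply Real.sqrt_le_sqrt; gcongr
  have h12 : N1 ≤ N2 + 1 :=
    le_trans (Nat.ceil_le_floor_add_one _) (by gcongr; exact Nat.floor_mono hst)
  have hsplit : gfun t - ∑ m ∈ Finset.Ico 1 N1, Real.cos (t * Real.log m) / Real.sqrt m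
      = ∑ m ∈ Finset.Ico N1 (N2 + 1), Real.cos (t * Real.log m) / Real.sqrt m := by
    have h : gfun t = ∑ m ∈ Finset.Ico 1 (N2 + 1),
        Real.cos (t * Real.log m) / Real.sqrt m := by
      rw [gfun, ← Finset.Ico_add_one_right_eq_Icc]
    rw [h, ← Finset.sum_Ico_consecutive _ hN1pos h12]
    ring
  rw [hsplit]
  set B := (2 * Real.pi) ^ ((1:ℝ)/4) / T ^ ((1:ℝ)/4) with hBdef
  have hterm : ∀ m ∈ Finset.Ico N1 (N2 + 1),
      |Real.cos (t * Real.log m) / Real.sqrt m| ≤ B := by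
    intro m hm
    rw [Finset.mem_Ico] at hm
    have hmN1 : (N1:ℝ) ≤ m := by exact_mod_cast hm.1
    have hsN1 : s ≤ (N1:ℝ) := Nat.le_ceil _
    have hc : (T / (2 * Real.pi)) ^ ((1:ℝ)/4) ≤ Real.sqrt m := by
      rw [← sqrt_sqrt_eq_rpow (by positivity)]
      exact Real.sqrt_le_sqrt (le_trans hsN1 hmN1)
    have hcpos : (0:ℝ) < (T / (2 * Real.pi)) ^ ((1:ℝ)/4) := by positivity
    rw [abs_div, _root_.abs_of_nonneg (Real.sqrt_nonneg _)]
    calc |Real.cos (t * Real.log m)| / Real.sqrt m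
        ≤ 1 / (T / (2 * Real.pi)) ^ ((1:ℝ)/4) := by
          apply div_le_div₀ (by norm_num) (Real.abs_cos_le_one _) hcpos hc
      _ = B := by
          rw [hBdef, Real.div_rpow hT0.le (by positivity), one_div_div]
  have habs : |∑ m ∈ Finset.Ico N1 (N2 + 1), Real.cos (t * Real.log m) / Real.sqrt m|
      ≤ ((N2 + 1 - N1 : ℕ) : ℝ) * B := by
    calc |∑ m ∈ Finset.Ico N1 (N2 + 1), Real.cos (t * Real.log m) / Real.sqrt m|
        ≤ ∑ m ∈ Finset.Ico N1 (N2 + 1), |Real.cos (t * Real.log m) / Real.sqrt m| :=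
          Finset.abs_sum_le_sum_abs _ _
      _ ≤ (Finset.Ico N1 (N2 + 1)).card • B := Finset.sum_le_card_nsmul _ _ B hterm
      _ = ((N2 + 1 - N1 : ℕ) : ℝ) * B := by rw [Nat.card_Ico, nsmul_eq_mul]
  -- bound the cardinality
  have hsT : s = Real.sqrt T / Real.sqrt (2 * Real.pi) := Real.sqrt_div hT0.le _
  have hs2 : s ^ 2 = T / (2 * Real.pi) := Real.sq_sqrt (by positivity)
  have hsqrt2π : Real.sqrt (2 * Real.pi) ^ 2 = 2 * Real.pi := Real.sq_sqrt (by positivity)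
  have hsqrt2π0 : (0:ℝ) < Real.sqrt (2 * Real.pi) := Real.sqrt_pos.mpr (by positivity)
  set D := C * L ^ k with hDdef
  have hD0 : (0:ℝ) < D := by positivity
  have hkey : Real.sqrt (t / (2 * Real.pi)) ≤ s + D := by
    rw [show s + D = Real.sqrt ((s + D)^2) by
      rw [Real.sqrt_sq (by linarith)]]
    apply Real.sqrt_le_sqrt
    have htT : t ≤ T + D * Real.sqrt T := by
      calc t ≤ T + H := htu
        _ ≤ T + D * Real.sqrt T := by rw [hDdef]; nlinarith [Real.sqrt_nonneg T]
    have hexp : (s + D)^2 = s^2 + 2*D*s + D^2 := by ring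
    rw [hexp, hs2, hsT]
    have hmain : D * Real.sqrt T / (2 * Real.pi) ≤ 2 * D * (Real.sqrt T / Real.sqrt (2 * Real.pi)) := by
      rw [div_le_iff₀ (by positivity)]
      have hq : (1:ℝ) ≤ 4 * Real.pi / Real.sqrt (2 * Real.pi) := by
        rw [le_div_iff₀ hsqrt2π0]
        nlinarith [hsqrt2π0.le]
      have heq : 2 * D * (Real.sqrt T / Real.sqrt (2 * Real.pi)) * (2 * Real.pi)
          = D * Real.sqrt T * (4 * Real.pi / Real.sqrt (2 * Real.pi)) := by
        field_simp; ring
      rw [heq]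
      have h2 : (0:ℝ) ≤ D * Real.sqrt T := by positivity
      calc D * Real.sqrt T = D * Real.sqrt T * 1 := (mul_one _).symm
        _ ≤ D * Real.sqrt T * (4 * Real.pi / Real.sqrt (2 * Real.pi)) :=
            mul_le_mul_of_nonneg_left hq h2
    calc t / (2 * Real.pi) ≤ (T + D * Real.sqrt T) / (2 * Real.pi) := by gcongr
      _ = T / (2 * Real.pi) + D * Real.sqrt T / (2 * Real.pi) := by ring
      _ ≤ T / (2 * Real.pi) + 2 * D * (Real.sqrt T / Real.sqrt (2 * Real.pi)) := by linarith
      _ ≤ T / (2 * Real.pi) + 2 * D * (Real.sqrt T / Real.sqrt (2 * Real.pi)) + D^2 := by linarith [sq_nonneg D]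
  have hcard : ((N2 + 1 - N1 : ℕ) : ℝ) ≤ (C + 1) * L ^ k := by
    have h1 : ((N2 + 1 - N1 : ℕ) : ℝ) = (N2:ℝ) + 1 - N1 := by
      rw [Nat.cast_sub h12]; push_cast; ring
    have h2 : (N2:ℝ) ≤ Real.sqrt (t / (2 * Real.pi)) := Nat.floor_le (Real.sqrt_nonneg _)
    have h3 : s ≤ (N1:ℝ) := Nat.le_ceil _
    rw [h1]
    calc (N2:ℝ) + 1 - N1 ≤ (s + D) + 1 - s := by linarith
      _ = D + 1 := by ring
      _ ≤ C * L ^ k + 1 * L ^ k := by simp only [one_mul]; linarith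
      _ = (C + 1) * L ^ k := by ring
  have hB0 : (0:ℝ) ≤ B := by rw [hBdef]; positivity
  calc |∑ m ∈ Finset.Ico N1 (N2 + 1), Real.cos (t * Real.log m) / Real.sqrt m|
      ≤ ((N2 + 1 - N1 : ℕ) : ℝ) * B := habs
    _ ≤ (C + 1) * L ^ k * B := by gcongr
    _ = (C + 1) * (2 * Real.pi) ^ ((1:ℝ)/4) * L ^ k / T ^ ((1:ℝ)/4) := by
        rw [hBdef]; ring
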